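/- Discrete fractional Noether's theorem: Let φ₁, φ₂, φ₃ be one-parameter groups of diffeomorphisms of ℝ^d, ℝ^m, ℝ^d respectively, and assume that the Hamiltonian H is ᶜΔ^α_−-invariant under (φ₁,φ₂,φ₃). Then for every solution (Q,U,P) of the shifted discrete fractional Pontryagin system (σPS), the quantity S_i = ∑_{r=1}^{N} ∑_{j=0}^{N−r+1} (A_r)_{i,j} (∂φ₁/∂s(0,Q_j) · P_{j+r−1}) is a discrete constant of motion, i.e. S_k = S_{k−1} for every k = 1,…,N. -/

import Mathlib

open Finset Filter
open scoped RealInnerProductSpace Topology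

noncomputable section

/-- `ℝ^n` with the euclidean norm. -/
abbrev Euc (n : ℕ) : Type := EuclideanSpace ℝ (Fin n)

/-- The Grünwald–Letnikov coefficients `α_r = (−α)(1−α)⋯(r−1−α)/r!`, with `α_0 = 1`. -/
def glCoef (α : ℝ) (r : ℕ) : ℝ :=
  (∏ i ∈ Finset.range r, ((i : ℝ) - α)) / (Nat.factorial r : ℝ)

/-- Left discrete fractional derivative `(Δ^α_− G)_k = h^{−α} ∑_{r=0}^{k} α_r G_{k−r}`. -/
def dMinus {n : ℕ} (α h : ℝ) (G : ℕ → Euc n) (k : ℕ) : Euc n :=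
  (h ^ (-α)) • ∑ r ∈ Finset.range (k + 1), glCoef α r • G (k - r)

/-- Right discrete fractional derivative `(Δ^α_+ G)_k = h^{−α} ∑_{r=0}^{N−k} α_r G_{k+r}`. -/
def dPlus {n : ℕ} (N : ℕ) (α h : ℝ) (G : ℕ → Euc n) (k : ℕ) : Euc n :=
  (h ^ (-α)) • ∑ r ∈ Finset.range (N - k + 1), glCoef α r • G (k + r)

/-- Left Caputo discrete fractional derivative `(ᶜΔ^α_− G)_k = h^{−α} ∑_{r=0}^{k} α_r (G_{k−r} − G_0)`. -/
def cdMinus {n : ℕ} (α h : ℝ) (G : ℕ → Euc n) (k : ℕ) : Euc n :=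
  dMinus α h (fun j => G j - G 0) k

/-- Right Caputo discrete fractional derivative
`(ᶜΔ^α_+ G)_k = h^{−α} ∑_{r=0}^{N−k} α_r (G_{k+r} − G_N)`. -/
def cdPlus {n : ℕ} (N : ℕ) (α h : ℝ) (G : ℕ → Euc n) (k : ℕ) : Euc n :=
  dPlus N α h (fun j => G j - G N) k

/-- The Hamiltonian `H(x,v,w,t) = L(x,v,t) + w · f(x,v,t)` associated to the Lagrangian `L`
and the constraint function `f`. -/
def Ham {d m : ℕ} (L : Euc d → Euc m → ℝ → ℝ) (f : Euc d → Euc m → ℝ → Euc d)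
    (x : Euc d) (v : Euc m) (w : Euc d) (t : ℝ) : ℝ :=
  L x v t + ⟪w, f x v t⟫

/-- The shifted discrete fractional Pontryagin system `(σPS)` associated to the Hamiltonian `H`:
`Q_0 = A`, `P_N = 0`, `(ᶜΔ^α_− Q)_k = ∂H/∂w(Q_k, U_k, P_{k−1}, t_k)` for `k = 1,…,N`,
`(Δ^α_+ P)_k = ∂H/∂x(Q_{k+1}, U_{k+1}, P_k, t_{k+1})` for `k = 0,…,N−1`, and
`∂H/∂v(Q_k, U_k, P_{k−1}, t_k) = 0` for `k = 1,…,N`. -/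
def SigmaPS {d m : ℕ} (N : ℕ) (α hstep a : ℝ) (A : Euc d)
    (H : Euc d → Euc m → Euc d → ℝ → ℝ)
    (Q : ℕ → Euc d) (U : ℕ → Euc m) (P : ℕ → Euc d) : Prop :=
  Q 0 = A ∧ P N = 0 ∧
  (∀ k, 1 ≤ k → k ≤ N →
    cdMinus α hstep Q k
      = gradient (fun w => H (Q k) (U k) w (a + (k : ℝ) * hstep)) (P (k - 1))) ∧
  (∀ k, k < N →
    dPlus N α hstep P k
      = gradient (fun x => H x (U (k + 1)) (P k) (a + ((k : ℝ) + 1) * hstep)) (Q (k + 1))) ∧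
  (∀ k, 1 ≤ k → k ≤ N →
    gradient (fun v => H (Q k) v (P (k - 1)) (a + (k : ℝ) * hstep)) (U k) = 0)

/-- A one-parameter group of diffeomorphisms of `ℝ^n`: a `C²` map `φ : ℝ × ℝ^n → ℝ^n` with
`φ(0,·) = id`, `φ(s,·) ∘ φ(s',·) = φ(s+s',·)`, each `φ(s,·)` being a diffeomorphism
(its inverse `φ(−s,·)` is automatically `C²`, so we only record bijectivity). -/
def OneParamGroup {n : ℕ} (φ : ℝ → Euc n → Euc n) : Prop :=
  ContDiff ℝ 2 (fun p : ℝ × Euc n => φ p.1 p.2) ∧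
  (∀ x, φ 0 x = x) ∧
  (∀ s s' x, φ s (φ s' x) = φ (s + s') x) ∧
  (∀ s, Function.Bijective (φ s))

/-- The Hamiltonian `H` is `ᶜΔ^α_−`-invariant under the action of the three one-parameter
groups of diffeomorphisms `(φ₁, φ₂, φ₃)`. -/
def CDeltaInvariant {d m : ℕ} (N : ℕ) (α hstep a : ℝ) (A : Euc d)
    (H : Euc d → Euc m → Euc d → ℝ → ℝ)
    (φ₁ : ℝ → Euc d → Euc d) (φ₂ : ℝ → Euc m → Euc m) (φ₃ : ℝ → Euc d → Euc d) : Prop :=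
  ∀ (Q : ℕ → Euc d) (U : ℕ → Euc m) (P : ℕ → Euc d),
    SigmaPS N α hstep a A H Q U P → ∀ s : ℝ, ∀ k, 1 ≤ k → k ≤ N →
      H (φ₁ s (Q k)) (φ₂ s (U k)) (φ₃ s (P (k - 1))) (a + (k : ℝ) * hstep)
        - ⟪φ₃ s (P (k - 1)), cdMinus α hstep (fun j => φ₁ s (Q j)) k⟫
      = H (Q k) (U k) (P (k - 1)) (a + (k : ℝ) * hstep)
        - ⟪P (k - 1), cdMinus α hstep Q k⟫

/-- `β^α_r = ∑_{k=0}^{r} α_k`. -/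
def betaCoef (α : ℝ) (r : ℕ) : ℝ := ∑ k ∈ Finset.range (r + 1), glCoef α k

/-- The matrix `B_r` (with indices `0,…,N`): `B_1 = Id` and, for `2 ≤ r ≤ N`,
`(B_r)_{i,j} = [1≤i≤N−1]·[1≤j≤N−r]·[0≤i−j≤r−1] − [j=0]·[r≤i]`. -/
def Bmat (N r i j : ℕ) : ℝ :=
  if r = 1 then (if i = j then 1 else 0)
  else
    (if (1 ≤ i ∧ i + 1 ≤ N) ∧ (1 ≤ j ∧ j + r ≤ N) ∧ (j ≤ i ∧ i < j + r) then 1 else 0)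
      - (if j = 0 ∧ r ≤ i then 1 else 0)

/-- The matrix `C_r`: `(C_r)_{i,j} = [r≤i]·[j=0]`. -/
def Cmat (r i j : ℕ) : ℝ := if r ≤ i ∧ j = 0 then 1 else 0

/-- The matrix `A_r = α_r B_r + β^α_r C_r`. -/
def Amat (α : ℝ) (N r i j : ℕ) : ℝ := glCoef α r * Bmat N r i j + betaCoef α r * Cmat r i j

/-- `S_i = ∑_{r=1}^{N} ∑_{j=0}^{N−r+1} (A_r)_{i,j} (G¹_j · G²_{j+r−1})`. -/
def transferS {n : ℕ} (N : ℕ) (α : ℝ) (G1 G2 : ℕ → Euc n) (i : ℕ) : ℝ :=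
  ∑ r ∈ Finset.Icc 1 N, ∑ j ∈ Finset.range (N - r + 2),
    Amat α N r i j * ⟪G1 j, G2 (j + r - 1)⟫


set_option maxHeartbeats 1000000

lemma glCoef_zero (α : ℝ) : glCoef α 0 = 1 := by simp [glCoef]

lemma betaCoef_succ (α : ℝ) (r : ℕ) :
    betaCoef α (r + 1) = betaCoef α r + glCoef α (r + 1) := by
  simp [betaCoef, Finset.sum_range_succ]

lemma pointwise_coeff (α : ℝ) (N k r j : ℕ) (hk1 : 1 ≤ k) (hkN : k ≤ N)
    (hr1 : 1 ≤ r) (hrN : r ≤ N) (hj : j ≤ N - r + 1) (T : ℕ → ℕ → ℝ) (hT : ∀ i, T i N = 0) :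
    (Amat α N r k j - Amat α N r (k - 1) j) * T j (j + r - 1)
      = (if j = k then (if r + k ≤ N + 1 then glCoef α r * T k (k + r - 1) else 0) else 0)
        - (if j = k - r then (if r + 1 ≤ k then glCoef α r * T (k - r) (k - 1) else 0) else 0)
        + (if j = 0 then (if r = k then betaCoef α (k - 1) * T 0 (k - 1) else 0) else 0) := by
  by_cases hjk : j = k
  · subst hjk
    rw [if_pos rfl, if_neg (show ¬(j = j - r) by omega), if_neg (show ¬(j = 0) by omega)]
    by_cases hc : j + r ≤ N
    · rw [if_pos (show r + j ≤ N + 1 by omega)]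
      simp only [Amat, Bmat, Cmat, eq_self_iff_true, and_true, true_and]
      split_ifs <;> first | (exfalso; omega) | ring
    · by_cases hc2 : j + r = N + 1
      · rw [if_pos (show r + j ≤ N + 1 by omega), show j + r - 1 = N by omega, hT]
        simp only [Amat, Bmat, Cmat, eq_self_iff_true, and_true, true_and]
        split_ifs <;> first | (exfalso; omega) | ring
      · rw [if_neg (show ¬(r + j ≤ N + 1) by omega)]
        simp only [Amat, Bmat, Cmat, eq_self_iff_true, and_true, true_and]
        split_ifs <;> first | (exfalso; omega) | ring
  · by_cases hjkr : j = k - r ∧ r + 1 ≤ k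
    · obtain ⟨hjv, hrk⟩ := hjkr
      subst hjv
      rw [if_neg hjk, if_pos rfl, if_pos hrk,
        if_neg (show ¬(k - r = 0) by omega), show k - r + r - 1 = k - 1 by omega]
      simp only [Amat, Bmat, Cmat, eq_self_iff_true, and_true, true_and]
      split_ifs <;> first | (exfalso; omega) | ring
    · by_cases hj0 : j = 0
      · subst hj0
        rw [if_neg hjk, if_pos rfl]
        by_cases hrlt : r + 1 ≤ k
        · rw [if_neg (show ¬((0:ℕ) = k - r) by omega)]
          rw [if_neg (show ¬(r = k) by omega)]
          simp only [Amat, Bmat, Cmat, eq_self_iff_true, and_true, true_and]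
          split_ifs <;> first | (exfalso; omega) | ring
        rw [if_neg hrlt, ite_self]
        by_cases hrk : r = k
        · subst hrk
          rw [if_pos rfl, show 0 + r - 1 = r - 1 by omega]
          have hb := betaCoef_succ α (r - 1)
          rw [show r - 1 + 1 = r by omega] at hb
          simp only [Amat, Bmat, Cmat, eq_self_iff_true, and_true, true_and]
          split_ifs
          any_goals (exfalso; omega)
          any_goals ring
          all_goals (rw [hb]; ring)
        · rw [if_neg hrk]
          simp only [Amat, Bmat, Cmat, eq_self_iff_true, and_true, true_and]
          split_ifs <;> first | (exfalso; omega) | ring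
      · rw [if_neg hjk, if_neg hj0,
          if_neg (show ¬(j = k - r) by intro h; exact hjkr ⟨h, by omega⟩)]
        simp only [Amat, Bmat, Cmat, eq_self_iff_true, and_true, true_and]
        split_ifs <;> first | (exfalso; omega) | ring

lemma key_sum (α : ℝ) (N k : ℕ) (hk1 : 1 ≤ k) (hkN : k ≤ N) (T : ℕ → ℕ → ℝ)
    (hT : ∀ i, T i N = 0) :
    ((∑ r ∈ Finset.Icc 1 N, ∑ j ∈ Finset.range (N - r + 2), Amat α N r k j * T j (j + r - 1))
      - ∑ r ∈ Finset.Icc 1 N, ∑ j ∈ Finset.range (N - r + 2), Amat α N r (k - 1) j * T j (j + r - 1))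
    = (∑ r ∈ Finset.range (N - (k - 1) + 1), glCoef α r * T k (k - 1 + r))
      - ∑ r ∈ Finset.range (k + 1), glCoef α r * (T (k - r) (k - 1) - T 0 (k - 1)) := by
  obtain ⟨k', rfl⟩ : ∃ k'', k = k'' + 1 := ⟨k - 1, by omega⟩
  simp only [Nat.add_sub_cancel]
  set S1 : ℝ := ∑ i ∈ Finset.range (N - k'), glCoef α (i + 1) * T (k' + 1) (k' + 1 + i) with hS1def
  set S2 : ℝ := ∑ i ∈ Finset.range k', glCoef α (i + 1) * T (k' - i) k' with hS2def
  have hE : ∀ r ∈ Finset.Icc 1 N,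
      ((∑ j ∈ Finset.range (N - r + 2), Amat α N r (k' + 1) j * T j (j + r - 1))
        - ∑ j ∈ Finset.range (N - r + 2), Amat α N r k' j * T j (j + r - 1))
      = ((if r + (k' + 1) ≤ N + 1 then glCoef α r * T (k' + 1) (k' + 1 + r - 1) else 0)
          - (if r + 1 ≤ k' + 1 then glCoef α r * T (k' + 1 - r) k' else 0))
          + (if r = k' + 1 then betaCoef α k' * T 0 k' else 0) := by
    intro r hr
    rw [Finset.mem_Icc] at hr
    rw [← Finset.sum_sub_distrib]
    have hpt : ∀ j ∈ Finset.range (N - r + 2),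
        Amat α N r (k' + 1) j * T j (j + r - 1) - Amat α N r k' j * T j (j + r - 1)
        = ((if j = k' + 1 then
              (if r + (k' + 1) ≤ N + 1 then glCoef α r * T (k' + 1) (k' + 1 + r - 1) else 0)
            else 0)
          - (if j = k' + 1 - r then
              (if r + 1 ≤ k' + 1 then glCoef α r * T (k' + 1 - r) k' else 0) else 0))
          + (if j = 0 then (if r = k' + 1 then betaCoef α k' * T 0 k' else 0) else 0) := by
      intro j hj
      rw [Finset.mem_range] at hj
      rw [← sub_mul]
      have := pointwise_coeff α N (k' + 1) r j (by omega) hkN hr.1 hr.2 (by omega) T hT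
      rw [Nat.add_sub_cancel] at this
      exact this
    rw [Finset.sum_congr rfl hpt, Finset.sum_add_distrib, Finset.sum_sub_distrib,
      Finset.sum_ite_eq', Finset.sum_ite_eq', Finset.sum_ite_eq']
    congr 1
    · congr 1
      · split_ifs with h1 h2 h2 <;>
          first | rfl | (exfalso; rw [Finset.mem_range] at *; omega)
      · split_ifs with h1 h2 h2 <;>
          first | rfl | (exfalso; rw [Finset.mem_range] at *; omega)
    · split_ifs with h1 h2 h2 <;>
        first | rfl | (exfalso; rw [Finset.mem_range] at *; omega)
  rw [← Finset.sum_sub_distrib, Finset.sum_congr rfl hE, Finset.sum_add_distrib,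
    Finset.sum_sub_distrib]
  have h1 : (∑ r ∈ Finset.Icc 1 N,
      if r + (k' + 1) ≤ N + 1 then glCoef α r * T (k' + 1) (k' + 1 + r - 1) else 0) = S1 := by
    rw [← Finset.sum_filter]
    have : (Finset.Icc 1 N).filter (fun r => r + (k' + 1) ≤ N + 1) = Finset.Icc 1 (N - k') := by
      ext r
      simp only [Finset.mem_filter, Finset.mem_Icc]
      omega
    rw [this, ← Finset.Ico_add_one_right_eq_Icc, Finset.sum_Ico_eq_sum_range]
    refine Finset.sum_congr rfl fun i _ => ?_
    rw [show 1 + i = i + 1 by omega, show k' + 1 + (i + 1) - 1 = k' + 1 + i by omega]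
  have h2 : (∑ r ∈ Finset.Icc 1 N,
      if r + 1 ≤ k' + 1 then glCoef α r * T (k' + 1 - r) k' else 0) = S2 := by
    rw [← Finset.sum_filter]
    have : (Finset.Icc 1 N).filter (fun r => r + 1 ≤ k' + 1) = Finset.Icc 1 k' := by
      ext r
      simp only [Finset.mem_filter, Finset.mem_Icc]
      omega
    rw [this, ← Finset.Ico_add_one_right_eq_Icc, Finset.sum_Ico_eq_sum_range]
    refine Finset.sum_congr rfl fun i _ => ?_
    rw [show 1 + i = i + 1 by omega, show k' + 1 - (i + 1) = k' - i by omega]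
  have h3 : (∑ r ∈ Finset.Icc 1 N,
      if r = k' + 1 then betaCoef α k' * T 0 k' else 0) = betaCoef α k' * T 0 k' := by
    rw [Finset.sum_ite_eq']
    rw [if_pos (by rw [Finset.mem_Icc]; omega)]
  rw [h1, h2, h3]
  have hr1 : (∑ r ∈ Finset.range (N - k' + 1), glCoef α r * T (k' + 1) (k' + r))
      = S1 + T (k' + 1) k' := by
    rw [Finset.sum_range_succ']
    rw [glCoef_zero, one_mul, Nat.add_zero]
    congr 1
    exact Finset.sum_congr rfl fun i _ => by
      rw [show k' + (i + 1) = k' + 1 + i by omega]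
  have hr2 : (∑ r ∈ Finset.range (k' + 1 + 1), glCoef α r * (T (k' + 1 - r) k' - T 0 k'))
      = (T (k' + 1) k' + S2 + glCoef α (k' + 1) * T 0 k') - betaCoef α (k' + 1) * T 0 k' := by
    simp only [mul_sub]
    rw [Finset.sum_sub_distrib, ← Finset.sum_mul]
    have hb : (∑ r ∈ Finset.range (k' + 1 + 1), glCoef α r) = betaCoef α (k' + 1) := rfl
    rw [hb, Finset.sum_range_succ, show k' + 1 - (k' + 1) = 0 by omega,
      Finset.sum_range_succ']
    rw [glCoef_zero, one_mul, Nat.sub_zero]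
    have : (∑ i ∈ Finset.range k', glCoef α (i + 1) * T (k' + 1 - (i + 1)) k') = S2 :=
      Finset.sum_congr rfl fun i _ => by rw [show k' + 1 - (i + 1) = k' - i by omega]
    rw [this]
    ring
  rw [hr1, hr2, betaCoef_succ α k']
  ring

lemma inner_gradient {n : ℕ} (f : Euc n → ℝ) (x v : Euc n) :
    ⟪gradient f x, v⟫ = fderiv ℝ f x v := by
  rw [gradient, InnerProductSpace.toDual_symm_apply]

lemma opg_hasDerivAt {n : ℕ} {φ : ℝ → Euc n → Euc n} (hφ : OneParamGroup φ) (x : Euc n) :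
    HasDerivAt (fun s => φ s x) (deriv (fun s => φ s x) 0) 0 := by
  have h1 : Differentiable ℝ (fun p : ℝ × Euc n => φ p.1 p.2) :=
    hφ.1.differentiable two_ne_zero
  exact ((h1.comp (differentiable_id.prodMk (differentiable_const x))) 0).hasDerivAt

lemma stationarity {d m : ℕ} (N : ℕ) (α hstep a : ℝ) (A : Euc d)
    (f : Euc d → Euc m → ℝ → Euc d)
    (hf : ContDiff ℝ 2 fun p : Euc d × Euc m × ℝ => f p.1 p.2.1 p.2.2)
    (L : Euc d → Euc m → ℝ → ℝ)
    (hL : ContDiff ℝ 2 fun p : Euc d × Euc m × ℝ => L p.1 p.2.1 p.2.2)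
    (φ₁ : ℝ → Euc d → Euc d) (φ₂ : ℝ → Euc m → Euc m) (φ₃ : ℝ → Euc d → Euc d)
    (hφ₁ : OneParamGroup φ₁) (hφ₂ : OneParamGroup φ₂) (hφ₃ : OneParamGroup φ₃)
    (hinv : CDeltaInvariant N α hstep a A (Ham L f) φ₁ φ₂ φ₃)
    (Q : ℕ → Euc d) (U : ℕ → Euc m) (P : ℕ → Euc d)
    (hQUP : SigmaPS N α hstep a A (Ham L f) Q U P)
    (k : ℕ) (hk1 : 1 ≤ k) (hkN : k ≤ N) :
    ⟪dPlus N α hstep P (k - 1), deriv (fun s => φ₁ s (Q k)) 0⟫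
      = ⟪P (k - 1), cdMinus α hstep (fun j => deriv (fun s => φ₁ s (Q j)) 0) k⟫ := by
  set t : ℝ := a + (k : ℝ) * hstep with ht
  set X : ℕ → Euc d := fun j => deriv (fun s => φ₁ s (Q j)) 0 with hX
  set X₂ : Euc m := deriv (fun s => φ₂ s (U k)) 0 with hX2
  set X₃ : Euc d := deriv (fun s => φ₃ s (P (k - 1))) 0 with hX3
  set z : Euc d × Euc m × Euc d := (Q k, U k, P (k - 1)) with hz
  set F : Euc d × Euc m × Euc d → ℝ := fun p => Ham L f p.1 p.2.1 p.2.2 t with hF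
  -- differentiability of F
  have hLd : Differentiable ℝ (fun p : Euc d × Euc m × ℝ => L p.1 p.2.1 p.2.2) :=
    hL.differentiable two_ne_zero
  have hfd : Differentiable ℝ (fun p : Euc d × Euc m × ℝ => f p.1 p.2.1 p.2.2) :=
    hf.differentiable two_ne_zero
  have he : Differentiable ℝ (fun p : Euc d × Euc m × Euc d => (p.1, p.2.1, t)) :=
    differentiable_fst.prodMk (differentiable_snd.fst.prodMk (differentiable_const t))
  have hFd : Differentiable ℝ F := by
    apply Differentiable.add
    · exact hLd.comp he
    · exact Differentiable.inner ℝ differentiable_snd.snd (hfd.comp he)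
  -- curve γ
  have hd1 := opg_hasDerivAt hφ₁ (Q k)
  have hd2 := opg_hasDerivAt hφ₂ (U k)
  have hd3 := opg_hasDerivAt hφ₃ (P (k - 1))
  have hγ : HasDerivAt (fun s => ((φ₁ s (Q k), φ₂ s (U k), φ₃ s (P (k - 1))) :
      Euc d × Euc m × Euc d)) (X k, X₂, X₃) 0 := hd1.prodMk (hd2.prodMk hd3)
  have hγ0 : ((φ₁ 0 (Q k), φ₂ 0 (U k), φ₃ 0 (P (k - 1))) : Euc d × Euc m × Euc d) = z := by
    rw [hφ₁.2.1, hφ₂.2.1, hφ₃.2.1]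
  have hFz : HasFDerivAt F (fderiv ℝ F z) z := (hFd z).hasFDerivAt
  have hcomp : HasDerivAt (fun s => F (φ₁ s (Q k), φ₂ s (U k), φ₃ s (P (k - 1))))
      (fderiv ℝ F z (X k, X₂, X₃)) 0 := by
    have h' : HasFDerivAt F (fderiv ℝ F z) (φ₁ 0 (Q k), φ₂ 0 (U k), φ₃ 0 (P (k - 1))) := by
      rw [hγ0]
      exact hFz
    exact h'.comp_hasDerivAt 0 hγ
  -- the inner product part
  have hDsum : HasDerivAt
      (fun s => cdMinus α hstep (fun j => φ₁ s (Q j)) k) (cdMinus α hstep X k) 0 := by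
    have hsum : HasDerivAt
        (fun s => ∑ r ∈ Finset.range (k + 1), glCoef α r • (φ₁ s (Q (k - r)) - φ₁ s (Q 0)))
        (∑ r ∈ Finset.range (k + 1), glCoef α r • (X (k - r) - X 0)) 0 :=
      HasDerivAt.fun_sum fun r _ =>
        ((opg_hasDerivAt hφ₁ (Q (k - r))).sub (opg_hasDerivAt hφ₁ (Q 0))).const_smul
          (glCoef α r)
    exact hsum.const_smul (hstep ^ (-α))
  have hW0 : cdMinus α hstep (fun j => φ₁ 0 (Q j)) k = cdMinus α hstep Q k := by
    simp only [hφ₁.2.1]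
  have hinner : HasDerivAt
      (fun s => ⟪φ₃ s (P (k - 1)), cdMinus α hstep (fun j => φ₁ s (Q j)) k⟫)
      (⟪P (k - 1), cdMinus α hstep X k⟫ + ⟪X₃, cdMinus α hstep Q k⟫) 0 := by
    have := HasDerivAt.inner ℝ hd3 hDsum
    rw [hφ₃.2.1, hW0] at this
    exact this
  -- g is constant
  set C : ℝ := Ham L f (Q k) (U k) (P (k - 1)) t - ⟪P (k - 1), cdMinus α hstep Q k⟫ with hC
  have hg : HasDerivAt
      (fun s => F (φ₁ s (Q k), φ₂ s (U k), φ₃ s (P (k - 1)))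
        - ⟪φ₃ s (P (k - 1)), cdMinus α hstep (fun j => φ₁ s (Q j)) k⟫)
      (fderiv ℝ F z (X k, X₂, X₃)
        - (⟪P (k - 1), cdMinus α hstep X k⟫ + ⟪X₃, cdMinus α hstep Q k⟫)) 0 :=
    hcomp.sub hinner
  have hgconst : (fun s => F (φ₁ s (Q k), φ₂ s (U k), φ₃ s (P (k - 1)))
      - ⟪φ₃ s (P (k - 1)), cdMinus α hstep (fun j => φ₁ s (Q j)) k⟫) = fun _ => C := by
    funext s
    exact hinv Q U P hQUP s k hk1 hkN
  have hV0 : fderiv ℝ F z (X k, X₂, X₃)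
      - (⟪P (k - 1), cdMinus α hstep X k⟫ + ⟪X₃, cdMinus α hstep Q k⟫) = 0 := by
    have h1 := hg.deriv
    rw [hgconst, deriv_const] at h1
    linarith [h1]
  -- decompose the full derivative into partial derivatives
  have hxincl : HasFDerivAt (fun x : Euc d => ((x, U k, P (k - 1)) : Euc d × Euc m × Euc d))
      ((ContinuousLinearMap.id ℝ (Euc d)).prod 0) (Q k) :=
    (hasFDerivAt_id (Q k)).prodMk (hasFDerivAt_const (U k, P (k - 1)) (Q k))
  have hvincl : HasFDerivAt (fun v : Euc m => ((Q k, v, P (k - 1)) : Euc d × Euc m × Euc d))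
      ((0 : Euc m →L[ℝ] Euc d).prod ((ContinuousLinearMap.id ℝ (Euc m)).prod 0)) (U k) :=
    (hasFDerivAt_const (Q k) (U k)).prodMk
      ((hasFDerivAt_id (U k)).prodMk (hasFDerivAt_const (P (k - 1)) (U k)))
  have hwincl : HasFDerivAt (fun w : Euc d => ((Q k, U k, w) : Euc d × Euc m × Euc d))
      ((0 : Euc d →L[ℝ] Euc d).prod ((0 : Euc d →L[ℝ] Euc m).prod
        (ContinuousLinearMap.id ℝ (Euc d)))) (P (k - 1)) :=
    (hasFDerivAt_const (Q k) (P (k - 1))).prodMk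
      ((hasFDerivAt_const (U k) (P (k - 1))).prodMk (hasFDerivAt_id (P (k - 1))))
  have hxg : ⟪gradient (fun x => Ham L f x (U k) (P (k - 1)) t) (Q k), X k⟫
      = fderiv ℝ F z (X k, 0, 0) := by
    rw [inner_gradient]
    have hslice : HasFDerivAt (fun x => Ham L f x (U k) (P (k - 1)) t)
        ((fderiv ℝ F z).comp ((ContinuousLinearMap.id ℝ (Euc d)).prod 0)) (Q k) :=
      by have := hFz.comp (Q k) hxincl; exact this
    rw [hslice.fderiv]
    rfl
  have hvg : ⟪gradient (fun v => Ham L f (Q k) v (P (k - 1)) t) (U k), X₂⟫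
      = fderiv ℝ F z (0, X₂, 0) := by
    rw [inner_gradient]
    have hslice : HasFDerivAt (fun v => Ham L f (Q k) v (P (k - 1)) t)
        ((fderiv ℝ F z).comp ((0 : Euc m →L[ℝ] Euc d).prod
          ((ContinuousLinearMap.id ℝ (Euc m)).prod 0))) (U k) :=
      by have := hFz.comp (U k) hvincl; exact this
    rw [hslice.fderiv]
    rfl
  have hwg : ⟪gradient (fun w => Ham L f (Q k) (U k) w t) (P (k - 1)), X₃⟫
      = fderiv ℝ F z (0, 0, X₃) := by
    rw [inner_gradient]
    have hslice : HasFDerivAt (fun w => Ham L f (Q k) (U k) w t)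
        ((fderiv ℝ F z).comp ((0 : Euc d →L[ℝ] Euc d).prod ((0 : Euc d →L[ℝ] Euc m).prod
          (ContinuousLinearMap.id ℝ (Euc d))))) (P (k - 1)) :=
      by have := hFz.comp (P (k - 1)) hwincl; exact this
    rw [hslice.fderiv]
    rfl
  have hdec : fderiv ℝ F z (X k, X₂, X₃)
      = fderiv ℝ F z (X k, 0, 0) + fderiv ℝ F z (0, X₂, 0) + fderiv ℝ F z (0, 0, X₃) := by
    rw [← map_add, ← map_add]
    congr 1
    simp [Prod.ext_iff]
  -- use the Pontryagin system
  have hgradw : cdMinus α hstep Q k = gradient (fun w => Ham L f (Q k) (U k) w t) (P (k - 1)) :=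
    hQUP.2.2.1 k hk1 hkN
  have hgradv : gradient (fun v => Ham L f (Q k) v (P (k - 1)) t) (U k) = 0 :=
    hQUP.2.2.2.2 k hk1 hkN
  have hgradx : dPlus N α hstep P (k - 1) = gradient (fun x => Ham L f x (U k) (P (k - 1)) t)
      (Q k) := by
    have h4 := hQUP.2.2.2.1 (k - 1) (by omega)
    have hk' : k - 1 + 1 = k := by omega
    rw [hk'] at h4
    have hcast : ((k - 1 : ℕ) : ℝ) + 1 = (k : ℝ) := by
      rw [Nat.cast_sub hk1]
      push_cast
      ring
    rw [hcast] at h4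
    exact h4
  -- conclude
  rw [hgradx] at *
  have e1 : fderiv ℝ F z (X k, 0, 0) = ⟪gradient (fun x => Ham L f x (U k) (P (k - 1)) t)
      (Q k), X k⟫ := hxg.symm
  have e2 : fderiv ℝ F z (0, X₂, 0) = 0 := by rw [← hvg, hgradv, inner_zero_left]
  have e3 : fderiv ℝ F z (0, 0, X₃) = ⟪X₃, cdMinus α hstep Q k⟫ := by
    rw [← hwg, ← hgradw, real_inner_comm]
  rw [hdec, e1, e2, e3] at hV0
  rw [← hgradx] at hV0 ⊢
  linarith [hV0]

/-- **Discrete fractional Noether's theorem.** -/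
theorem discrete_fractional_noether
    (d m N : ℕ) (hd : 1 ≤ d) (hm : 1 ≤ m) (hN : 1 ≤ N)
    (a b : ℝ) (hab : a < b) (α : ℝ) (hα : 0 < α) (hα1 : α ≤ 1)
    (A : Euc d)
    (f : Euc d → Euc m → ℝ → Euc d)
    (hf : ContDiff ℝ 2 fun p : Euc d × Euc m × ℝ => f p.1 p.2.1 p.2.2)
    (L : Euc d → Euc m → ℝ → ℝ)
    (hL : ContDiff ℝ 2 fun p : Euc d × Euc m × ℝ => L p.1 p.2.1 p.2.2)
    (φ₁ : ℝ → Euc d → Euc d) (φ₂ : ℝ → Euc m → Euc m) (φ₃ : ℝ → Euc d → Euc d)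
    (hφ₁ : OneParamGroup φ₁) (hφ₂ : OneParamGroup φ₂) (hφ₃ : OneParamGroup φ₃)
    (hinv : CDeltaInvariant N α ((b - a) / (N : ℝ)) a A (Ham L f) φ₁ φ₂ φ₃) :
    ∀ (Q : ℕ → Euc d) (U : ℕ → Euc m) (P : ℕ → Euc d),
      SigmaPS N α ((b - a) / (N : ℝ)) a A (Ham L f) Q U P →
      ∀ k, 1 ≤ k → k ≤ N →
        transferS N α (fun j => deriv (fun s => φ₁ s (Q j)) 0) P k
          = transferS N α (fun j => deriv (fun s => φ₁ s (Q j)) 0) P (k - 1) := by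
  intro Q U P hQUP k hk1 hkN
  set hstep : ℝ := (b - a) / (N : ℝ) with hhstep
  have hh : 0 < hstep := by
    apply div_pos (by linarith)
    exact_mod_cast Nat.pos_of_ne_zero (by omega)
  set X : ℕ → Euc d := fun j => deriv (fun s => φ₁ s (Q j)) 0 with hX
  have hstat := stationarity N α hstep a A f hf L hL φ₁ φ₂ φ₃ hφ₁ hφ₂ hφ₃ hinv Q U P hQUP
    k hk1 hkN
  have hT : ∀ i, ⟪X i, P N⟫ = 0 := fun i => by rw [hQUP.2.1, inner_zero_right]
  have hkey := key_sum α N k hk1 hkN (fun j l => ⟪X j, P l⟫) hT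
  have e1 : ⟪dPlus N α hstep P (k - 1), X k⟫
      = hstep ^ (-α) * ∑ r ∈ Finset.range (N - (k - 1) + 1), glCoef α r * ⟪X k, P (k - 1 + r)⟫ := by
    rw [dPlus, real_inner_smul_left]
    congr 1
    rw [sum_inner]
    refine Finset.sum_congr rfl fun r _ => ?_
    rw [real_inner_smul_left, real_inner_comm]
  have e2 : ⟪P (k - 1), cdMinus α hstep X k⟫
      = hstep ^ (-α) * ∑ r ∈ Finset.range (k + 1),
          glCoef α r * (⟪X (k - r), P (k - 1)⟫ - ⟪X 0, P (k - 1)⟫) := by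
    rw [cdMinus, dMinus, real_inner_smul_right]
    congr 1
    rw [inner_sum]
    refine Finset.sum_congr rfl fun r _ => ?_
    rw [real_inner_smul_right, inner_sub_right, real_inner_comm (P (k - 1)) (X (k - r)),
      real_inner_comm (P (k - 1)) (X 0)]
  rw [e1, e2] at hstat
  have hne : hstep ^ (-α) ≠ 0 := ne_of_gt (Real.rpow_pos_of_pos hh _)
  have hzero := mul_left_cancel₀ hne hstat
  have hdiff : transferS N α X P k - transferS N α X P (k - 1) = 0 := by
    simp only [transferS]
    rw [hkey, hzero]
    ring
  linarith [hdiff]
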